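/- Let ζ₁,…,ζₙ be distinct complex numbers with positive imaginary parts and c_{jk} = i/(ζ_k - ζ_j*). Then det[c_{i_b i_a}]_{a,b=1}^{n} = (i/(ζ_{i_n} - ζ_{i_n}*)) · ∏_{l=1}^{n-1} |(ζ_{i_l} - ζ_{i_n})/(ζ_{i_l} - ζ_{i_n}*)|² · det[c_{i_b i_a}]_{a,b=1}^{n-1}. -/

import Mathlib

open Complex Matrix BigOperators

noncomputable section

lemma aux_schur (u x y w z : ℂ) (hu : u ≠ 0) (d1 : x - y ≠ 0) (d2 : x - z ≠ 0)
    (d3 : w - y ≠ 0) (d4 : w - z ≠ 0) :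
    u / (x - y) - (u / (x - z)) * (u / (w - z))⁻¹ * (u / (w - y))
      = (w - x) / (x - z) * ((y - z) / (w - y) * (u / (x - y))) := by
  field_simp
  ring

lemma aux_sub_conj_ne {z w : ℂ} (hz : 0 < z.im) (hw : 0 < w.im) :
    z - (starRingEnd ℂ) w ≠ 0 := by
  intro h
  have h2 : (z - (starRingEnd ℂ) w).im = z.im + w.im := by
    simp [Complex.sub_im, Complex.conj_im]
  rw [h] at h2
  simp only [Complex.zero_im] at h2
  linarith

theorem stmt6 {n : ℕ} (ζ : Fin (n+1) → ℂ) (hinj : Function.Injective ζ)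
    (him : ∀ j, 0 < (ζ j).im) :
    Matrix.det (fun a b : Fin (n+1) => Complex.I / (ζ a - (starRingEnd ℂ) (ζ b)))
      = Complex.I / (ζ (Fin.last n) - (starRingEnd ℂ) (ζ (Fin.last n))) *
        ((∏ l : Fin n, (‖(ζ l.castSucc - ζ (Fin.last n)) /
            (ζ l.castSucc - (starRingEnd ℂ) (ζ (Fin.last n)))‖)^2 : ℝ) : ℂ) *
        Matrix.det (fun a b : Fin n =>
          Complex.I / (ζ a.castSucc - (starRingEnd ℂ) (ζ b.castSucc))) := by
  classical
  have hne : ∀ a b : Fin (n+1), ζ a - (starRingEnd ℂ) (ζ b) ≠ 0 :=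
    fun a b => aux_sub_conj_ne (him a) (him b)
  have hne' : ∀ a b : Fin (n+1), (starRingEnd ℂ) (ζ a) - ζ b ≠ 0 := by
    intro a b h
    apply hne b a
    rw [← neg_sub] at h
    simpa using neg_eq_zero.mp h
  set c : Fin (n+1) → Fin (n+1) → ℂ :=
    fun a b => Complex.I / (ζ a - (starRingEnd ℂ) (ζ b)) with hc
  set N := Fin.last n with hN
  set A : Matrix (Fin n) (Fin n) ℂ := Matrix.of fun a b => c a.castSucc b.castSucc with hA
  set B : Matrix (Fin n) (Fin 1) ℂ := Matrix.of fun a _ => c a.castSucc N with hB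
  set Cm : Matrix (Fin 1) (Fin n) ℂ := Matrix.of fun _ b => c N b.castSucc with hCm
  set D : Matrix (Fin 1) (Fin 1) ℂ := Matrix.of fun _ _ => c N N with hD
  have hcnn : c N N ≠ 0 := div_ne_zero Complex.I_ne_zero (hne N N)
  -- invertibility of D
  letI : Invertible D := by
    refine ⟨Matrix.of fun _ _ => (c N N)⁻¹, ?_, ?_⟩ <;>
    · ext i j
      simp [hD, Matrix.mul_apply, Fin.sum_univ_one, inv_mul_cancel₀ hcnn,
        mul_inv_cancel₀ hcnn, Matrix.one_apply, Fin.fin_one_eq_zero i, Fin.fin_one_eq_zero j]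
  have hsymm_cast : ∀ i : Fin n, finSumFinEquiv.symm i.castSucc = Sum.inl i :=
    fun i => finSumFinEquiv_symm_apply_castAdd i
  -- step 1: reindex as a block matrix
  have h1 : Matrix.det (fun a b : Fin (n+1) => c a b)
      = Matrix.det (Matrix.fromBlocks A B Cm D) := by
    rw [← Matrix.det_submatrix_equiv_self finSumFinEquiv.symm
      (Matrix.fromBlocks A B Cm D)]
    congr 1
    funext a b
    induction a using Fin.lastCases with
    | last =>
      induction b using Fin.lastCases with
      | last => simp [Matrix.submatrix_apply, finSumFinEquiv_symm_last, hD, hN]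
      | cast j => simp [Matrix.submatrix_apply, finSumFinEquiv_symm_last, hsymm_cast j, hCm, hN]
    | cast i =>
      induction b using Fin.lastCases with
      | last => simp [Matrix.submatrix_apply, finSumFinEquiv_symm_last, hsymm_cast i, hB, hN]
      | cast j => simp [Matrix.submatrix_apply, hsymm_cast i, hsymm_cast j, hA]
  -- step 2: Schur complement
  have h2 : Matrix.det (Matrix.fromBlocks A B Cm D)
      = c N N * Matrix.det (A - B * ⅟D * Cm) := by
    rw [Matrix.det_fromBlocks₂₂]
    congr 1
    simp [hD, Matrix.det_fin_one]
  -- the scalar factors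
  set g : Fin n → ℂ := fun a => (ζ N - ζ a.castSucc) / (ζ a.castSucc - (starRingEnd ℂ) (ζ N)) with hg
  set h : Fin n → ℂ := fun b => ((starRingEnd ℂ) (ζ b.castSucc) - (starRingEnd ℂ) (ζ N)) /
      (ζ N - (starRingEnd ℂ) (ζ b.castSucc)) with hh
  have h3 : A - B * ⅟D * Cm = Matrix.of fun a b => g a * (h b * A a b) := by
    have hinv : (⅟D : Matrix (Fin 1) (Fin 1) ℂ) = Matrix.of fun _ _ => (c N N)⁻¹ := rfl
    ext a b
    have d1 := hne a.castSucc b.castSucc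
    have d2 := hne a.castSucc N
    have d3 := hne N b.castSucc
    have d4 := hne N N
    simp only [Matrix.sub_apply, Matrix.mul_apply, Fin.sum_univ_one, hinv, Matrix.of_apply,
      hA, hB, hCm, hg, hh, hc]
    exact aux_schur Complex.I _ _ _ _ Complex.I_ne_zero d1 d2 d3 d4
  have h4 : Matrix.det (A - B * ⅟D * Cm)
      = (∏ a, g a) * ((∏ b, h b) * Matrix.det A) := by
    rw [h3]
    show Matrix.det (Matrix.of fun a b => g a * ((Matrix.of fun i j => h j * A i j)) a b)
        = _
    rw [Matrix.det_mul_column g, Matrix.det_mul_row h]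
  -- identify the product with the real product
  have h5 : (∏ a, g a) * (∏ b, h b)
      = ((∏ l : Fin n, (‖(ζ l.castSucc - ζ N) /
          (ζ l.castSucc - (starRingEnd ℂ) (ζ N))‖)^2 : ℝ) : ℂ) := by
    push_cast
    rw [← Finset.prod_mul_distrib]
    apply Finset.prod_congr rfl
    intro l _
    have e1 : ((‖(ζ l.castSucc - ζ N) / (ζ l.castSucc - (starRingEnd ℂ) (ζ N))‖
        : ℝ) : ℂ)^2
        = ((ζ l.castSucc - ζ N) / (ζ l.castSucc - (starRingEnd ℂ) (ζ N))) *
          (starRingEnd ℂ) ((ζ l.castSucc - ζ N) / (ζ l.castSucc - (starRingEnd ℂ) (ζ N))) := by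
      rw [Complex.mul_conj, ← Complex.sq_norm]
      push_cast
      ring
    rw [e1, map_div₀, map_sub, map_sub, Complex.conj_conj, hg, hh]
    have d1 := hne l.castSucc N
    have d2 := hne' l.castSucc N
    have d3 := hne N l.castSucc
    field_simp
    ring
  calc Matrix.det (fun a b : Fin (n+1) => c a b)
      = c N N * ((∏ a, g a) * ((∏ b, h b) * Matrix.det A)) := by rw [h1, h2, h4]
    _ = c N N * ((∏ a, g a) * (∏ b, h b)) * Matrix.det A := by ring
    _ = _ := by rw [h5]; rfl

end
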